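/- For every finite simple graph G (with any fixed endpoint-ordering of its edges), the number of 7-cycle subgraphs of the odd expanded graph G'' equals 3 times the number of 3-cycle subgraphs of G. -/

import Mathlib

/-- The cycle graph `C_n` on vertex set `ZMod n`: `i` and `j` are adjacent iff
they differ by `1`. -/
def cycleGraphZMod (n : ℕ) : SimpleGraph (ZMod n) :=
  SimpleGraph.fromRel (fun i j => j = i + 1)

/-- The number of `k`-cycle subgraphs of `G`: the number of subgraphs of `G`
whose underlying graph is isomorphic to the cycle graph `C_k`. -/
noncomputable def cycleCount {V : Type*} (G : SimpleGraph V) (k : ℕ) : ℕ :=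
  Nat.card {H : G.Subgraph // Nonempty (H.coe ≃g cycleGraphZMod k)}

/-- The odd expanded graph `G''` of a simple graph `G` with an endpoint-ordering
`f` of its edges: every edge `e` with ordered endpoints `(u_e, v_e)` is replaced
by a path of length `2` (through `(e,0)`) and a path of length `3` (through
`(e,1)` and `(e,2)`) between `u_e` and `v_e`. -/
def oddExpandedGraph {V : Type*} (G : SimpleGraph V) (f : G.edgeSet → V × V) :
    SimpleGraph (V ⊕ (G.edgeSet × Fin 3)) :=
  SimpleGraph.fromRel (fun x y => ∃ e : G.edgeSet,
    (x = Sum.inl (f e).1 ∧ y = Sum.inr (e, 0)) ∨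
    (x = Sum.inr (e, 0) ∧ y = Sum.inl (f e).2) ∨
    (x = Sum.inl (f e).1 ∧ y = Sum.inr (e, 1)) ∨
    (x = Sum.inr (e, 1) ∧ y = Sum.inr (e, 2)) ∨
    (x = Sum.inr (e, 2) ∧ y = Sum.inl (f e).2))


section CycSub

variable {W : Type*} {Γ : SimpleGraph W} {n : ℕ}

def cycSub (g : ZMod n → W) (hg : ∀ i, Γ.Adj (g i) (g (i + 1))) : Γ.Subgraph where
  verts := Set.range g
  Adj x y := ∃ i, (x = g i ∧ y = g (i + 1)) ∨ (y = g i ∧ x = g (i + 1))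
  adj_sub := by rintro x y ⟨i, ⟨rfl, rfl⟩ | ⟨rfl, rfl⟩⟩
                exacts [hg i, (hg i).symm]
  edge_vert := by rintro x y ⟨i, ⟨rfl, rfl⟩ | ⟨rfl, rfl⟩⟩
                  exacts [⟨i, rfl⟩, ⟨i + 1, rfl⟩]
  symm := by constructor; rintro x y ⟨i, h | h⟩
             exacts [⟨i, Or.inr h⟩, ⟨i, Or.inl h⟩]

lemma cycleGraphZMod_adj (i j : ZMod n) :
    (cycleGraphZMod n).Adj i j ↔ i ≠ j ∧ (j = i + 1 ∨ i = j + 1) := Iff.rfl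

/-- The cycle subgraph of an injective cyclically-adjacent map is isomorphic to `C_n`. -/
noncomputable def cycSubIso (g : ZMod n → W) (hg : ∀ i, Γ.Adj (g i) (g (i + 1)))
    (hinj : Function.Injective g) (hn : ∀ i : ZMod n, i ≠ i + 1) :
    (cycSub g hg).coe ≃g cycleGraphZMod n := by
  refine RelIso.symm ⟨Equiv.ofInjective g hinj, ?_⟩
  intro i j
  show (cycSub g hg).coe.Adj ⟨g i, ⟨i, rfl⟩⟩ ⟨g j, ⟨j, rfl⟩⟩ ↔ (cycleGraphZMod n).Adj i j
  rw [cycleGraphZMod_adj]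
  show (∃ k, (g i = g k ∧ g j = g (k + 1)) ∨ (g j = g k ∧ g i = g (k + 1))) ↔ _
  constructor
  · rintro ⟨k, ⟨h1, h2⟩ | ⟨h1, h2⟩⟩
    · obtain rfl := hinj h1
      obtain rfl := hinj h2
      exact ⟨hn i, Or.inl rfl⟩
    · obtain rfl := hinj h1
      obtain rfl := hinj h2
      exact ⟨(hn j).symm, Or.inr rfl⟩
  · rintro ⟨hne, h | h⟩
    · exact ⟨i, Or.inl ⟨rfl, by rw [← h]⟩⟩
    · exact ⟨j, Or.inr ⟨rfl, by rw [← h]⟩⟩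

/-- Every subgraph isomorphic to `C_n` is a `cycSub`. -/
lemma exists_cycSub (H : Γ.Subgraph) (φ : H.coe ≃g cycleGraphZMod n)
    (hn : ∀ i : ZMod n, i ≠ i + 1) :
    ∃ (g : ZMod n → W) (hg : ∀ i, Γ.Adj (g i) (g (i + 1))),
      Function.Injective g ∧ H = cycSub g hg := by
  set g : ZMod n → W := fun i => ((φ.symm i : H.verts) : W) with hgdef
  have hmem : ∀ i, g i ∈ H.verts := fun i => (φ.symm i).2
  have hadjH : ∀ i : ZMod n, H.Adj (g i) (g (i + 1)) := by
    intro i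
    have : (cycleGraphZMod n).Adj i (i + 1) := ⟨hn i, Or.inl rfl⟩
    have := φ.symm.map_adj_iff.mpr this
    exact this
  have hg : ∀ i, Γ.Adj (g i) (g (i + 1)) := fun i => (hadjH i).adj_sub
  have hinj : Function.Injective g := by
    intro i j hij
    have := Subtype.ext hij
    exact φ.symm.injective this
  refine ⟨g, hg, hinj, ?_⟩
  apply SimpleGraph.Subgraph.ext
  · ext v
    constructor
    · intro hv
      exact ⟨φ ⟨v, hv⟩, by simp [hgdef]⟩
    · rintro ⟨i, rfl⟩
      exact hmem i
  · ext x y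
    show H.Adj x y ↔ (cycSub g hg).Adj x y
    constructor
    · intro hxy
      have hx := hxy.fst_mem
      have hy := hxy.snd_mem
      have hcoe : H.coe.Adj ⟨x, hx⟩ ⟨y, hy⟩ := hxy
      have hC : (cycleGraphZMod n).Adj (φ ⟨x, hx⟩) (φ ⟨y, hy⟩) := φ.map_adj_iff.mpr hcoe
      rw [cycleGraphZMod_adj] at hC
      have hgx : g (φ ⟨x, hx⟩) = x := by simp [hgdef]
      have hgy : g (φ ⟨y, hy⟩) = y := by simp [hgdef]
      obtain ⟨hne, h | h⟩ := hC
      · exact ⟨φ ⟨x, hx⟩, Or.inl ⟨hgx.symm, by rw [← h, hgy]⟩⟩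
      · exact ⟨φ ⟨y, hy⟩, Or.inr ⟨hgy.symm, by rw [← h, hgx]⟩⟩
    · rintro ⟨i, ⟨rfl, rfl⟩ | ⟨rfl, rfl⟩⟩
      exacts [hadjH i, (hadjH i).symm]

lemma cycSub_verts (g : ZMod n → W) (hg : ∀ i, Γ.Adj (g i) (g (i + 1))) :
    (cycSub g hg).verts = Set.range g := rfl

lemma cycSub_adj (g : ZMod n → W) (hg : ∀ i, Γ.Adj (g i) (g (i + 1))) (x y : W) :
    (cycSub g hg).Adj x y ↔ ∃ i, (x = g i ∧ y = g (i + 1)) ∨ (y = g i ∧ x = g (i + 1)) :=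
  Iff.rfl

lemma rot_adj (g : ZMod n → W) (hg : ∀ i, Γ.Adj (g i) (g (i + 1))) (t : ZMod n) :
    ∀ i, Γ.Adj ((g ∘ (· + t)) i) ((g ∘ (· + t)) (i + 1)) := by
  intro i
  have : i + 1 + t = (i + t) + 1 := by ring
  simpa [this] using hg (i + t)

lemma refl_adj (g : ZMod n → W) (hg : ∀ i, Γ.Adj (g i) (g (i + 1))) (t : ZMod n) :
    ∀ i, Γ.Adj ((g ∘ (t - ·)) i) ((g ∘ (t - ·)) (i + 1)) := by
  intro i
  have h1 : t - i = (t - (i + 1)) + 1 := by ring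
  simpa [h1] using (hg (t - (i + 1))).symm

lemma cycSub_rot (g : ZMod n → W) (hg : ∀ i, Γ.Adj (g i) (g (i + 1))) (t : ZMod n) :
    cycSub (g ∘ (· + t)) (rot_adj g hg t) = cycSub g hg := by
  have hsurj : Function.Surjective (fun i : ZMod n => i + t) :=
    fun j => ⟨j - t, by ring⟩
  apply SimpleGraph.Subgraph.ext
  · simp [cycSub_verts, Set.range_comp, Set.range_eq_univ.2 hsurj]
  · ext x y
    simp only [cycSub_adj, Function.comp_apply]
    constructor
    · rintro ⟨i, h⟩
      refine ⟨i + t, ?_⟩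
      have : i + 1 + t = (i + t) + 1 := by ring
      rw [this] at h; exact h
    · rintro ⟨i, h⟩
      refine ⟨i - t, ?_⟩
      have h1 : i - t + t = i := by ring
      have h2 : i - t + 1 + t = i + 1 := by ring
      rw [h1, h2]; exact h

lemma cycSub_refl (g : ZMod n → W) (hg : ∀ i, Γ.Adj (g i) (g (i + 1))) (t : ZMod n) :
    cycSub (g ∘ (t - ·)) (refl_adj g hg t) = cycSub g hg := by
  have hsurj : Function.Surjective (fun i : ZMod n => t - i) :=
    fun j => ⟨t - j, by ring⟩
  apply SimpleGraph.Subgraph.ext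
  · simp [cycSub_verts, Set.range_comp, Set.range_eq_univ.2 hsurj]
  · ext x y
    simp only [cycSub_adj, Function.comp_apply]
    constructor
    · rintro ⟨i, h⟩
      refine ⟨t - (i + 1), ?_⟩
      have h1 : t - (i + 1) + 1 = t - i := by ring
      rw [h1]
      tauto
    · rintro ⟨i, h⟩
      refine ⟨t - (i + 1), ?_⟩
      have h1 : t - (t - (i+1)) = i + 1 := by ring
      have h2 : t - (t - (i+1) + 1) = i := by ring
      rw [h1, h2]
      tauto


lemma cycSub_congr {g g' : ZMod n → W} (h : g = g') (hg : ∀ i, Γ.Adj (g i) (g (i + 1)))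
    (hg' : ∀ i, Γ.Adj (g' i) (g' (i + 1))) : cycSub g hg = cycSub g' hg' := by
  subst h; rfl

end CycSub

section Tri

variable {W : Type*} (Γ : SimpleGraph W)

abbrev TriData :=
  {x : W × W × W // Γ.Adj x.1 x.2.1 ∧ Γ.Adj x.2.1 x.2.2 ∧ Γ.Adj x.2.2 x.1}

variable {Γ}

def g3 (t : TriData Γ) : ZMod 3 → W := fun i =>
  if i = 0 then t.1.1 else if i = 1 then t.1.2.1 else t.1.2.2

lemma g3_zero (t : TriData Γ) : g3 t 0 = t.1.1 := by simp [g3]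
lemma g3_one (t : TriData Γ) : g3 t 1 = t.1.2.1 := by
  simp [g3, show (1 : ZMod 3) ≠ 0 by decide]
lemma g3_two (t : TriData Γ) : g3 t 2 = t.1.2.2 := by
  simp [g3, show (2 : ZMod 3) ≠ 0 by decide, show (2 : ZMod 3) ≠ 1 by decide]

lemma zmod3_cases : ∀ i : ZMod 3, i = 0 ∨ i = 1 ∨ i = 2 := by decide

lemma g3_adj (t : TriData Γ) : ∀ i, Γ.Adj (g3 t i) (g3 t (i + 1)) := by
  intro i
  obtain ⟨h1, h2, h3⟩ := t.2
  rcases zmod3_cases i with rfl | rfl | rfl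
  · rw [g3_zero, show (0 : ZMod 3) + 1 = 1 by decide, g3_one]; exact h1
  · rw [g3_one, show (1 : ZMod 3) + 1 = 2 by decide, g3_two]; exact h2
  · rw [g3_two, show (2 : ZMod 3) + 1 = 0 by decide, g3_zero]; exact h3

lemma g3_inj (t : TriData Γ) : Function.Injective (g3 t) := by
  obtain ⟨h1, h2, h3⟩ := t.2
  have hab := h1.ne
  have hbc := h2.ne
  have hca := h3.ne
  intro i j hij
  rcases zmod3_cases i with rfl | rfl | rfl <;> rcases zmod3_cases j with rfl | rfl | rfl <;>
    simp only [g3_zero, g3_one, g3_two] at hij <;> first | rfl | (exfalso; tauto)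

def triSub (t : TriData Γ) : Γ.Subgraph := cycSub (g3 t) (g3_adj t)

lemma zmod3_ne : ∀ i : ZMod 3, i ≠ i + 1 := by decide

noncomputable def triIso (t : TriData Γ) : (triSub t).coe ≃g cycleGraphZMod 3 :=
  cycSubIso (g3 t) (g3_adj t) (g3_inj t) zmod3_ne

end Tri

section TriCount

variable {W : Type*} {Γ : SimpleGraph W}

lemma triSub_verts (t : TriData Γ) : (triSub t).verts = Set.range (g3 t) := rfl

lemma mem_triSub_verts (t : TriData Γ) (x : W) :
    x ∈ (triSub t).verts ↔ x = t.1.1 ∨ x = t.1.2.1 ∨ x = t.1.2.2 := by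
  rw [triSub_verts]
  constructor
  · rintro ⟨i, rfl⟩
    rcases zmod3_cases i with rfl | rfl | rfl
    · exact Or.inl (g3_zero t)
    · exact Or.inr (Or.inl (g3_one t))
    · exact Or.inr (Or.inr (g3_two t))
  · rintro (rfl | rfl | rfl)
    exacts [⟨0, g3_zero t⟩, ⟨1, g3_one t⟩, ⟨2, g3_two t⟩]

lemma triSub_adj_ab (t : TriData Γ) : (triSub t).Adj t.1.1 t.1.2.1 :=
  ⟨0, Or.inl ⟨(g3_zero t).symm, by rw [show (0 : ZMod 3) + 1 = 1 by decide, g3_one]⟩⟩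

/-- The map from ordered triangles to (triangle subgraph, ordered adjacent pair). -/
noncomputable def tri2sig (t : TriData Γ) :
    Σ T : {H : Γ.Subgraph // Nonempty (H.coe ≃g cycleGraphZMod 3)},
      {p : W × W // T.1.Adj p.1 p.2} :=
  ⟨⟨triSub t, ⟨triIso t⟩⟩, ⟨(t.1.1, t.1.2.1), triSub_adj_ab t⟩⟩

lemma tri2sig_bij : Function.Bijective (tri2sig (Γ := Γ)) := by
  constructor
  · rintro ⟨⟨a, b, c⟩, h1, h2, h3⟩ ⟨⟨a', b', c'⟩, h1', h2', h3'⟩ heq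
    simp only [tri2sig, Sigma.mk.inj_iff, Subtype.mk.injEq] at heq
    obtain ⟨hT, hp⟩ := heq
    have hp' : ((a, b) : W × W) = (a', b') := by
      have := Subtype.heq_iff_coe_eq ?_ |>.mp hp
      · exact this
      · intro x; rw [hT]
    obtain ⟨rfl, rfl⟩ := Prod.mk.injEq .. ▸ hp'
    have hc : c' ∈ (triSub (⟨(a, b, c), h1, h2, h3⟩ : TriData Γ)).verts := by
      rw [hT]
      exact (mem_triSub_verts _ c').mpr (Or.inr (Or.inr rfl))
    rw [mem_triSub_verts] at hc
    simp only at hc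
    rcases hc with rfl | rfl | rfl
    · exact absurd rfl h3'.ne
    · exact absurd rfl h2'.ne.symm
    · rfl
  · rintro ⟨⟨T, ⟨φ⟩⟩, ⟨⟨x, y⟩, hxy⟩⟩
    obtain ⟨g, hg, hinj, rfl⟩ := exists_cycSub T φ zmod3_ne
    have key : ∀ i : ZMod 3, x = g i → y = g (i + 1) →
        ∃ t : TriData Γ, tri2sig t = ⟨⟨cycSub g hg, ⟨φ⟩⟩, ⟨(x, y), hxy⟩⟩ := by
      rintro i rfl rfl
      have e1 : i + 2 + 1 = i := by
        have h3 : (2 + 1 : ZMod 3) = 0 := by decide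
        rw [add_assoc, h3, add_zero]
      have a2 : Γ.Adj (g i) (g (i + 2)) := by
        have := hg (i + 2); rw [e1] at this; exact this.symm
      have ab2 : Γ.Adj (g (i + 1)) (g (i + 2)) := by
        have := hg (i + 1); rw [show i + 1 + 1 = i + 2 by ring] at this; exact this
      have ac2 : Γ.Adj (g (i + 2)) (g i) := by
        have := hg (i + 2); rw [e1] at this; exact this
      refine ⟨⟨(g i, g (i + 1), g (i + 2)), hg i, ab2, ac2⟩, ?_⟩
      have hfun : g3 (⟨(g i, g (i + 1), g (i + 2)), hg i, ab2, ac2⟩ : TriData Γ) = g ∘ (· + i) := by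
        funext j
        rcases zmod3_cases j with rfl | rfl | rfl
        · rw [g3_zero]; show g i = g (0 + i); rw [zero_add]
        · rw [g3_one]; show g (i + 1) = g (1 + i); rw [add_comm]
        · rw [g3_two]; show g (i + 2) = g (2 + i); rw [add_comm]
      have hTeq : triSub (⟨(g i, g (i + 1), g (i + 2)), hg i, ab2, ac2⟩ : TriData Γ) = cycSub g hg := by
        rw [triSub, cycSub_congr hfun _ (rot_adj g hg i), cycSub_rot]
      refine Sigma.ext (Subtype.ext hTeq) ?_
      refine (Subtype.heq_iff_coe_eq ?_).mpr rfl
      intro p; simp only [tri2sig]; rw [hTeq]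
    have hxy' := hxy
    obtain ⟨i, ⟨hx, hy⟩ | ⟨hy, hx⟩⟩ := hxy'
    · exact key i hx hy
    · -- x = g (i+1), y = g i : use the reflected triple
      subst hx; subst hy
      have e1 : ∀ j : ZMod 3, j + 2 + 1 = j := by decide
      have a2 : Γ.Adj (g i) (g (i + 2)) := by
        have := hg (i + 2); rw [e1 i] at this; exact this.symm
      have ca2 : Γ.Adj (g (i + 2)) (g (i + 1)) := by
        have := hg (i + 1); rw [show i + 1 + 1 = i + 2 by ring] at this; exact this.symm
      refine ⟨⟨(g (i + 1), g i, g (i + 2)), (hg i).symm, a2, ca2⟩, ?_⟩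
      have hfun : g3 (⟨(g (i + 1), g i, g (i + 2)), (hg i).symm, a2, ca2⟩ : TriData Γ)
          = g ∘ ((i + 1) - ·) := by
        funext j
        rcases zmod3_cases j with rfl | rfl | rfl
        · rw [g3_zero]; show g (i + 1) = g (i + 1 - 0); rw [sub_zero]
        · rw [g3_one]; show g i = g (i + 1 - 1); rw [add_sub_cancel_right]
        · rw [g3_two]; show g (i + 2) = g (i + 1 - 2)
          congr 1
          have : (1 - 2 : ZMod 3) = 2 := by decide
          rw [add_sub_assoc, this]
      have hTeq : triSub (⟨(g (i + 1), g i, g (i + 2)), (hg i).symm, a2, ca2⟩ : TriData Γ)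
          = cycSub g hg := by
        rw [triSub, cycSub_congr hfun _ (refl_adj g hg (i + 1)), cycSub_refl]
      refine Sigma.ext (Subtype.ext hTeq) ?_
      refine (Subtype.heq_iff_coe_eq ?_).mpr rfl
      intro p; simp only [tri2sig]; rw [hTeq]

end TriCount

section Counting

variable {W : Type*} {Γ : SimpleGraph W}

instance subgraphFinite [Finite W] : Finite Γ.Subgraph :=
  Finite.of_injective (fun H => (H.verts, H.Adj))
    (by rintro H1 H2 h
        exact SimpleGraph.Subgraph.ext (congrArg Prod.fst h) (congrArg Prod.snd h))

lemma c3_pairs_card :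
    Nat.card {p : ZMod 3 × ZMod 3 // (cycleGraphZMod 3).Adj p.1 p.2} = 6 := by
  have key : ∀ p : ZMod 3 × ZMod 3, (p.1 ≠ p.2 ∧ (p.2 = p.1 + 1 ∨ p.1 = p.2 + 1)) ↔
      p ∈ ({(0, 1), (1, 0), (1, 2), (2, 1), (0, 2), (2, 0)} :
        Finset (ZMod 3 × ZMod 3)) := by decide
  have := Nat.card_congr (Equiv.subtypeEquivRight
    (p := fun p : ZMod 3 × ZMod 3 => (cycleGraphZMod 3).Adj p.1 p.2) key)
  rw [this, Nat.card_eq_finsetCard]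
  decide

lemma fiber_card (T : Γ.Subgraph) (φ : T.coe ≃g cycleGraphZMod 3) :
    Nat.card {p : W × W // T.Adj p.1 p.2} = 6 := by
  rw [← c3_pairs_card]
  apply Nat.card_congr
  refine ⟨fun p => ⟨(φ ⟨p.1.1, p.2.fst_mem⟩, φ ⟨p.1.2, p.2.snd_mem⟩),
            φ.map_adj_iff.mpr p.2⟩,
          fun q => ⟨((φ.symm q.1.1 : T.verts), (φ.symm q.1.2 : T.verts)),
            φ.symm.map_adj_iff.mpr q.2⟩, ?_, ?_⟩
  · rintro ⟨⟨x, y⟩, h⟩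
    apply Subtype.ext
    simp
  · rintro ⟨⟨i, j⟩, h⟩
    apply Subtype.ext
    simp

lemma tridata_card [Finite W] : Nat.card (TriData Γ) = 6 * cycleCount Γ 3 := by
  classical
  rw [Nat.card_eq_of_bijective _ tri2sig_bij]
  have h6 : ∀ T : {H : Γ.Subgraph // Nonempty (H.coe ≃g cycleGraphZMod 3)},
      Nat.card {p : W × W // T.1.Adj p.1 p.2} = 6 := fun T => fiber_card T.1 T.2.some
  letI : Fintype {H : Γ.Subgraph // Nonempty (H.coe ≃g cycleGraphZMod 3)} :=
    Fintype.ofFinite _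
  letI : ∀ T : {H : Γ.Subgraph // Nonempty (H.coe ≃g cycleGraphZMod 3)},
      Fintype {p : W × W // T.1.Adj p.1 p.2} := fun T => Fintype.ofFinite _
  rw [Nat.card_eq_fintype_card, Fintype.card_sigma]
  have : ∀ T : {H : Γ.Subgraph // Nonempty (H.coe ≃g cycleGraphZMod 3)},
      Fintype.card {p : W × W // T.1.Adj p.1 p.2} = 6 := fun T => by
    rw [← Nat.card_eq_fintype_card]; exact h6 T
  rw [Finset.sum_congr rfl (fun T _ => this T), Finset.sum_const, smul_eq_mul]
  rw [cycleCount, Nat.card_eq_fintype_card, ← Finset.card_univ]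
  ring

end Counting

section OEG

open Sum

variable {V : Type*} {G : SimpleGraph V} {f : G.edgeSet → V × V}

local notation "X" => V ⊕ (G.edgeSet × Fin 3)

lemma oeg_not_adj_inl_inl (a b : V) : ¬ (oddExpandedGraph G f).Adj (inl a) (inl b) := by
  rintro ⟨hne, h | h⟩ <;> obtain ⟨e, h⟩ := h <;>
    rcases h with ⟨h1, h2⟩ | ⟨h1, h2⟩ | ⟨h1, h2⟩ | ⟨h1, h2⟩ | ⟨h1, h2⟩ <;> simp_all

lemma oeg_adj_inr0 (x : X) (e : G.edgeSet)
    (h : (oddExpandedGraph G f).Adj x (inr (e, 0))) :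
    x = inl (f e).1 ∨ x = inl (f e).2 := by
  obtain ⟨hne, h | h⟩ := h <;> obtain ⟨e', h⟩ := h <;>
    rcases h with ⟨h1, h2⟩ | ⟨h1, h2⟩ | ⟨h1, h2⟩ | ⟨h1, h2⟩ | ⟨h1, h2⟩ <;> simp_all

lemma oeg_adj_inr1 (x : X) (e : G.edgeSet)
    (h : (oddExpandedGraph G f).Adj x (inr (e, 1))) :
    x = inl (f e).1 ∨ x = inr (e, 2) := by
  obtain ⟨hne, h | h⟩ := h <;> obtain ⟨e', h⟩ := h <;>
    rcases h with ⟨h1, h2⟩ | ⟨h1, h2⟩ | ⟨h1, h2⟩ | ⟨h1, h2⟩ | ⟨h1, h2⟩ <;> simp_all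

lemma oeg_adj_inr2 (x : X) (e : G.edgeSet)
    (h : (oddExpandedGraph G f).Adj x (inr (e, 2))) :
    x = inr (e, 1) ∨ x = inl (f e).2 := by
  obtain ⟨hne, h | h⟩ := h <;> obtain ⟨e', h⟩ := h <;>
    rcases h with ⟨h1, h2⟩ | ⟨h1, h2⟩ | ⟨h1, h2⟩ | ⟨h1, h2⟩ | ⟨h1, h2⟩ <;> simp_all

lemma oeg_adj_inr_inr (p q : G.edgeSet × Fin 3)
    (h : (oddExpandedGraph G f).Adj (inr p) (inr q)) :
    ∃ e, (p = (e, 1) ∧ q = (e, 2)) ∨ (p = (e, 2) ∧ q = (e, 1)) := by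
  obtain ⟨hne, h | h⟩ := h <;> obtain ⟨e', h⟩ := h <;>
    rcases h with ⟨h1, h2⟩ | ⟨h1, h2⟩ | ⟨h1, h2⟩ | ⟨h1, h2⟩ | ⟨h1, h2⟩ <;> simp_all

end OEG

section G7

open Sum
open scoped Classical

variable {V : Type*} {G : SimpleGraph V} (f : G.edgeSet → V × V)

local notation "X" => V ⊕ (G.edgeSet × Fin 3)

def oeE1 (t : TriData G) : G.edgeSet := ⟨s(t.1.1, t.1.2.1), G.mem_edgeSet.mpr t.2.1⟩
def oeE2 (t : TriData G) : G.edgeSet := ⟨s(t.1.2.1, t.1.2.2), G.mem_edgeSet.mpr t.2.2.1⟩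
def oeE3 (t : TriData G) : G.edgeSet := ⟨s(t.1.2.2, t.1.1), G.mem_edgeSet.mpr t.2.2.2⟩

noncomputable def swB (t : TriData G) : Bool :=
  if t.1.2.2 = (f (oeE3 t)).1 then false else true

noncomputable def g7 (t : TriData G) : ZMod 7 → X := fun i =>
  if i = 0 then inl t.1.1
  else if i = 1 then inr (oeE1 t, 0)
  else if i = 2 then inl t.1.2.1
  else if i = 3 then inr (oeE2 t, 0)
  else if i = 4 then inl t.1.2.2
  else if i = 5 then inr (oeE3 t, if swB f t then 2 else 1)
  else inr (oeE3 t, if swB f t then 1 else 2)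

variable (t : TriData G)

lemma g7_0 : g7 f t 0 = inl t.1.1 := by simp [g7]
lemma g7_1 : g7 f t 1 = inr (oeE1 t, 0) := by
  simp only [g7]; norm_num [show (1 : ZMod 7) ≠ 0 by decide]
lemma g7_2 : g7 f t 2 = inl t.1.2.1 := by
  simp only [g7]
  norm_num [show (2 : ZMod 7) ≠ 0 by decide, show (2 : ZMod 7) ≠ 1 by decide]
lemma g7_3 : g7 f t 3 = inr (oeE2 t, 0) := by
  simp only [g7]
  norm_num [show (3 : ZMod 7) ≠ 0 by decide, show (3 : ZMod 7) ≠ 1 by decide,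
    show (3 : ZMod 7) ≠ 2 by decide]
lemma g7_4 : g7 f t 4 = inl t.1.2.2 := by
  simp only [g7]
  norm_num [show (4 : ZMod 7) ≠ 0 by decide, show (4 : ZMod 7) ≠ 1 by decide,
    show (4 : ZMod 7) ≠ 2 by decide, show (4 : ZMod 7) ≠ 3 by decide]
lemma g7_5 : g7 f t 5 = inr (oeE3 t, if swB f t then 2 else 1) := by
  simp only [g7]
  norm_num [show (5 : ZMod 7) ≠ 0 by decide, show (5 : ZMod 7) ≠ 1 by decide,
    show (5 : ZMod 7) ≠ 2 by decide, show (5 : ZMod 7) ≠ 3 by decide,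
    show (5 : ZMod 7) ≠ 4 by decide]
lemma g7_6 : g7 f t 6 = inr (oeE3 t, if swB f t then 1 else 2) := by
  simp only [g7]
  norm_num [show (6 : ZMod 7) ≠ 0 by decide, show (6 : ZMod 7) ≠ 1 by decide,
    show (6 : ZMod 7) ≠ 2 by decide, show (6 : ZMod 7) ≠ 3 by decide,
    show (6 : ZMod 7) ≠ 4 by decide, show (6 : ZMod 7) ≠ 5 by decide]

end G7

section G7b

open Sum

variable {V : Type*} {G : SimpleGraph V} (f : G.edgeSet → V × V)
  (hf : ∀ e : G.edgeSet, (e : Sym2 V) = s((f e).1, (f e).2))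

local notation "X" => V ⊕ (G.edgeSet × Fin 3)

lemma zmod7_cases : ∀ i : ZMod 7,
    i = 0 ∨ i = 1 ∨ i = 2 ∨ i = 3 ∨ i = 4 ∨ i = 5 ∨ i = 6 := by decide

include hf

lemma oeg_fst_ne_snd (e : G.edgeSet) : (f e).1 ≠ (f e).2 := by
  have he := e.2
  rw [hf e] at he
  exact (G.mem_edgeSet.mp he).ne

lemma orient (t : TriData G) :
    (swB f t = false → t.1.2.2 = (f (oeE3 t)).1 ∧ t.1.1 = (f (oeE3 t)).2) ∧
    (swB f t = true → t.1.2.2 = (f (oeE3 t)).2 ∧ t.1.1 = (f (oeE3 t)).1) := by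
  have hca := t.2.2.2.ne
  have he : (oeE3 t : Sym2 V) = s(t.1.2.2, t.1.1) := rfl
  have he2 := hf (oeE3 t)
  rw [he] at he2
  rw [Sym2.eq_iff] at he2
  unfold swB
  split_ifs with h
  · refine ⟨fun _ => ⟨h, ?_⟩, fun hcon => by simp at hcon⟩
    rcases he2 with ⟨_, h2⟩ | ⟨h1, h2⟩
    · exact h2
    · exact absurd (h2.trans h.symm).symm hca
  · refine ⟨fun hcon => by simp at hcon, fun _ => ?_⟩
    rcases he2 with ⟨h1, _⟩ | ⟨h1, h2⟩
    · exact absurd h1 h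
    · exact ⟨h1, h2⟩

lemma adj_gadget0 (e : G.edgeSet) (x y : V) (hxy : (e : Sym2 V) = s(x, y)) :
    (oddExpandedGraph G f).Adj (inl x) (inr (e, 0)) ∧
      (oddExpandedGraph G f).Adj (inr (e, 0)) (inl y) := by
  have h2 := hf e
  rw [hxy, Sym2.eq_iff] at h2
  rcases h2 with ⟨h1, h2⟩ | ⟨h1, h2⟩
  · exact ⟨⟨by simp, Or.inl ⟨e, Or.inl ⟨by rw [h1], rfl⟩⟩⟩,
      ⟨by simp, Or.inl ⟨e, Or.inr (Or.inl ⟨rfl, by rw [h2]⟩)⟩⟩⟩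
  · exact ⟨⟨by simp, Or.inr ⟨e, Or.inr (Or.inl ⟨rfl, by rw [h1]⟩)⟩⟩,
      ⟨by simp, Or.inr ⟨e, Or.inl ⟨by rw [h2], rfl⟩⟩⟩⟩

lemma g7_adj (t : TriData G) : ∀ i, (oddExpandedGraph G f).Adj (g7 f t i) (g7 f t (i + 1)) := by
  have h1 := adj_gadget0 f hf (oeE1 t) t.1.1 t.1.2.1 rfl
  have h2 := adj_gadget0 f hf (oeE2 t) t.1.2.1 t.1.2.2 rfl
  have hor := orient f hf t
  intro i
  rcases zmod7_cases i with rfl | rfl | rfl | rfl | rfl | rfl | rfl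
  · rw [show (0 : ZMod 7) + 1 = 1 by decide, g7_0, g7_1]; exact h1.1
  · rw [show (1 : ZMod 7) + 1 = 2 by decide, g7_1, g7_2]; exact h1.2
  · rw [show (2 : ZMod 7) + 1 = 3 by decide, g7_2, g7_3]; exact h2.1
  · rw [show (3 : ZMod 7) + 1 = 4 by decide, g7_3, g7_4]; exact h2.2
  · rw [show (4 : ZMod 7) + 1 = 5 by decide, g7_4, g7_5]
    cases hsw : swB f t with
    | false =>
      obtain ⟨hc, _⟩ := hor.1 hsw
      simp only [Bool.false_eq_true, if_false]
      exact ⟨by simp, Or.inl ⟨oeE3 t, Or.inr (Or.inr (Or.inl ⟨by rw [hc], rfl⟩))⟩⟩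
    | true =>
      obtain ⟨hc, _⟩ := hor.2 hsw
      simp only [if_pos rfl]
      exact ⟨by simp, Or.inr ⟨oeE3 t, Or.inr (Or.inr (Or.inr (Or.inr ⟨rfl, by rw [hc]⟩)))⟩⟩
  · rw [show (5 : ZMod 7) + 1 = 6 by decide, g7_5, g7_6]
    cases hsw : swB f t with
    | false =>
      simp only [Bool.false_eq_true, if_false]
      refine ⟨by simp [Prod.ext_iff], Or.inl ⟨oeE3 t, Or.inr (Or.inr (Or.inr (Or.inl ⟨rfl, rfl⟩)))⟩⟩
    | true =>
      simp only [if_pos rfl]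
      refine ⟨by simp [Prod.ext_iff], Or.inr ⟨oeE3 t, Or.inr (Or.inr (Or.inr (Or.inl ⟨rfl, rfl⟩)))⟩⟩
  · rw [show (6 : ZMod 7) + 1 = 0 by decide, g7_6, g7_0]
    cases hsw : swB f t with
    | false =>
      obtain ⟨_, ha⟩ := hor.1 hsw
      simp only [Bool.false_eq_true, if_false]
      exact ⟨by simp, Or.inl ⟨oeE3 t, Or.inr (Or.inr (Or.inr (Or.inr ⟨rfl, by rw [ha]⟩)))⟩⟩
    | true =>
      obtain ⟨_, ha⟩ := hor.2 hsw
      simp only [if_pos rfl]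
      exact ⟨by simp, Or.inr ⟨oeE3 t, Or.inr (Or.inr (Or.inl ⟨by rw [ha], rfl⟩))⟩⟩

lemma g7_inj (t : TriData G) : Function.Injective (g7 f t) := by
  have hab := t.2.1.ne
  have hbc := t.2.2.1.ne
  have hca := t.2.2.2.ne
  have h12 : oeE1 t ≠ oeE2 t := by
    intro h
    have := congrArg Subtype.val h
    rw [show (oeE1 t : Sym2 V) = s(t.1.1, t.1.2.1) from rfl,
      show (oeE2 t : Sym2 V) = s(t.1.2.1, t.1.2.2) from rfl, Sym2.eq_iff] at this
    tauto
  intro i j hij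
  rcases zmod7_cases i with rfl | rfl | rfl | rfl | rfl | rfl | rfl <;>
    rcases zmod7_cases j with rfl | rfl | rfl | rfl | rfl | rfl | rfl <;>
    first
      | rfl
      | (exfalso
         revert hij
         cases hsw : swB f t <;>
           simp [g7_0, g7_1, g7_2, g7_3, g7_4, g7_5, g7_6, hsw, hab, hbc, hca, h12,
             Ne.symm hab, Ne.symm hbc, Ne.symm hca, Ne.symm h12, Prod.ext_iff,
             show (0 : Fin 3) ≠ 1 by decide, show (0 : Fin 3) ≠ 2 by decide,
             show (1 : Fin 3) ≠ 2 by decide, show (1 : Fin 3) ≠ 0 by decide,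
             show (2 : Fin 3) ≠ 0 by decide, show (2 : Fin 3) ≠ 1 by decide])

end G7b

section Classify

open Sum

variable {V : Type*} {G : SimpleGraph V} (f : G.edgeSet → V × V)
  (hf : ∀ e : G.edgeSet, (e : Sym2 V) = s((f e).1, (f e).2))

local notation "X" => V ⊕ (G.edgeSet × Fin 3)

lemma fin3_cases : ∀ j : Fin 3, j = 0 ∨ j = 1 ∨ j = 2 := by decide

include hf

lemma classify_core (g : ZMod 7 → X) (hinj : Function.Injective g)
    (hadj : ∀ i, (oddExpandedGraph G f).Adj (g i) (g (i + 1)))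
    (e : G.edgeSet) (h5 : g 5 = inr (e, 1)) (h6 : g 6 = inr (e, 2)) :
    ∃ t : TriData G, swB f t = false ∧ g7 f t = g := by
  have e01 : (0 : ZMod 7) + 1 = 1 := by decide
  have e12 : (1 : ZMod 7) + 1 = 2 := by decide
  have e23 : (2 : ZMod 7) + 1 = 3 := by decide
  have e34 : (3 : ZMod 7) + 1 = 4 := by decide
  have e45 : (4 : ZMod 7) + 1 = 5 := by decide
  have e56 : (5 : ZMod 7) + 1 = 6 := by decide
  have e60 : (6 : ZMod 7) + 1 = 0 := by decide
  -- determine g 0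
  have ha : g 0 = inl (f e).2 := by
    have h := hadj 6
    rw [e60, h6] at h
    rcases oeg_adj_inr2 (g 0) e h.symm with h' | h'
    · exact absurd (hinj (h'.trans h5.symm)) (by decide)
    · exact h'
  -- determine g 4
  have hc : g 4 = inl (f e).1 := by
    have h := hadj 4
    rw [e45, h5] at h
    rcases oeg_adj_inr1 (g 4) e h with h' | h'
    · exact h'
    · exact absurd (hinj (h'.trans h6.symm)) (by decide)
  -- block 0-1-2 : find e1 and b
  obtain ⟨e1, b, hg1, hb, hs1⟩ :
      ∃ (e1 : G.edgeSet) (b : V), g 1 = inr (e1, 0) ∧ g 2 = inl b ∧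
        (e1 : Sym2 V) = s((f e).2, b) := by
    cases hg1 : g 1 with
    | inl b' =>
      have h := hadj 0
      rw [e01, ha, hg1] at h
      exact absurd h (oeg_not_adj_inl_inl _ _)
    | inr p =>
      obtain ⟨e', j⟩ := p
      rcases fin3_cases j with rfl | rfl | rfl
      · -- j = 0 : the good case
        have h0 := hadj 0; rw [e01, hg1] at h0
        have h1 := hadj 1; rw [e12, hg1] at h1
        have hg0 := oeg_adj_inr0 (g 0) e' h0
        have hg2 := oeg_adj_inr0 (g 2) e' h1.symm
        have hne02 : g 0 ≠ g 2 := fun h => absurd (hinj h) (by decide)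
        have hfe' := hf e'
        rcases hg0 with h0' | h0' <;> rcases hg2 with h2' | h2'
        · exact absurd (h0'.trans h2'.symm) hne02
        · refine ⟨e', (f e').2, rfl, h2', ?_⟩
          rw [hfe']
          rw [ha] at h0'
          rw [Sum.inl_injective h0']
        · refine ⟨e', (f e').1, rfl, h2', ?_⟩
          rw [hfe']
          rw [ha] at h0'
          rw [Sum.inl_injective h0', Sym2.eq_swap]
        · exact absurd (h0'.trans h2'.symm) hne02
      · -- j = 1 : impossible
        exfalso
        have h0 := hadj 0; rw [e01, hg1] at h0
        rcases oeg_adj_inr1 (g 0) e' h0 with h0' | h0'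
        swap
        · rw [ha] at h0'; simp at h0'
        have h1 := hadj 1; rw [e12, hg1] at h1
        rcases oeg_adj_inr1 (g 2) e' h1.symm with h2' | h2'
        · rw [ha] at h0'
          exact absurd (hinj (h2'.trans (h0'.symm ▸ ha : g 0 = inl (f e').1).symm))
            (show ((2 : ZMod 7) = 0) → False by decide)
        have h2 := hadj 2; rw [e23, h2'] at h2
        rcases oeg_adj_inr2 (g 3) e' h2.symm with h3' | h3'
        · exact absurd (hinj (h3'.trans hg1.symm)) (by decide)
        have h3 := hadj 3; rw [e34, h3', hc] at h3
        exact oeg_not_adj_inl_inl _ _ h3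
      · -- j = 2 : impossible
        exfalso
        have h0 := hadj 0; rw [e01, hg1] at h0
        rcases oeg_adj_inr2 (g 0) e' h0 with h0' | h0'
        · rw [ha] at h0'; simp at h0'
        have h1 := hadj 1; rw [e12, hg1] at h1
        rcases oeg_adj_inr2 (g 2) e' h1.symm with h2' | h2'
        swap
        · rw [ha] at h0'
          exact absurd (hinj (h2'.trans (h0'.symm ▸ ha : g 0 = inl (f e').2).symm))
            (show ((2 : ZMod 7) = 0) → False by decide)
        have h2 := hadj 2; rw [e23, h2'] at h2
        rcases oeg_adj_inr1 (g 3) e' h2.symm with h3' | h3'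
        swap
        · exact absurd (hinj (h3'.trans hg1.symm)) (by decide)
        have h3 := hadj 3; rw [e34, h3', hc] at h3
        exact oeg_not_adj_inl_inl _ _ h3
  -- block 2-3-4 : find e2
  obtain ⟨e2, hg3, hs2⟩ :
      ∃ (e2 : G.edgeSet), g 3 = inr (e2, 0) ∧ (e2 : Sym2 V) = s(b, (f e).1) := by
    cases hg3 : g 3 with
    | inl d =>
      have h := hadj 2
      rw [e23, hb, hg3] at h
      exact absurd h (oeg_not_adj_inl_inl _ _)
    | inr p =>
      obtain ⟨e', j⟩ := p
      rcases fin3_cases j with rfl | rfl | rfl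
      · have h2 := hadj 2; rw [e23, hg3] at h2
        have h3 := hadj 3; rw [e34, hg3] at h3
        have hg2 := oeg_adj_inr0 (g 2) e' h2
        have hg4 := oeg_adj_inr0 (g 4) e' h3.symm
        have hne24 : g 2 ≠ g 4 := fun h => absurd (hinj h) (by decide)
        have hfe' := hf e'
        rcases hg2 with h2' | h2' <;> rcases hg4 with h4' | h4'
        · exact absurd (h2'.trans h4'.symm) hne24
        · refine ⟨e', rfl, ?_⟩
          rw [hfe']
          rw [hb] at h2'; rw [hc] at h4'
          rw [Sum.inl_injective h2', Sum.inl_injective h4']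
        · refine ⟨e', rfl, ?_⟩
          rw [hfe']
          rw [hb] at h2'; rw [hc] at h4'
          rw [Sum.inl_injective h2', Sum.inl_injective h4', Sym2.eq_swap]
        · exact absurd (h2'.trans h4'.symm) hne24
      · exfalso
        have h2 := hadj 2; rw [e23, hg3] at h2
        have h3 := hadj 3; rw [e34, hg3] at h3
        rcases oeg_adj_inr1 (g 2) e' h2 with h2' | h2'
        swap
        · rw [hb] at h2'; simp at h2'
        rcases oeg_adj_inr1 (g 4) e' h3.symm with h4' | h4'
        · exact absurd (hinj (h4'.trans h2'.symm)) (by decide)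
        · rw [hc] at h4'; simp at h4'
      · exfalso
        have h2 := hadj 2; rw [e23, hg3] at h2
        have h3 := hadj 3; rw [e34, hg3] at h3
        rcases oeg_adj_inr2 (g 2) e' h2 with h2' | h2'
        · rw [hb] at h2'; simp at h2'
        rcases oeg_adj_inr2 (g 4) e' h3.symm with h4' | h4'
        · rw [hc] at h4'; simp at h4'
        · exact absurd (hinj (h4'.trans h2'.symm)) (by decide)
  -- assemble the triangle
  have hAdjAB : G.Adj (f e).2 b := by
    rw [← G.mem_edgeSet, ← hs1]; exact e1.2
  have hAdjBC : G.Adj b (f e).1 := by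
    rw [← G.mem_edgeSet, ← hs2]; exact e2.2
  have hAdjCA : G.Adj (f e).1 (f e).2 := by
    rw [← G.mem_edgeSet, ← hf e]; exact e.2
  set tt : TriData G := ⟨((f e).2, b, (f e).1), hAdjAB, hAdjBC, hAdjCA⟩ with htt
  have hE3 : oeE3 tt = e := Subtype.ext (by
    show s((f e).1, (f e).2) = (e : Sym2 V)
    rw [← hf e])
  have hE1 : oeE1 tt = e1 := Subtype.ext (by
    show s((f e).2, b) = (e1 : Sym2 V)
    rw [← hs1])
  have hE2 : oeE2 tt = e2 := Subtype.ext (by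
    show s(b, (f e).1) = (e2 : Sym2 V)
    rw [← hs2])
  have hsw : swB f tt = false := by
    unfold swB
    rw [if_pos (by rw [hE3])]
  refine ⟨tt, hsw, ?_⟩
  funext i
  rcases zmod7_cases i with rfl | rfl | rfl | rfl | rfl | rfl | rfl
  · rw [g7_0, ha]
  · rw [g7_1, hg1, hE1]
  · rw [g7_2, hb]
  · rw [g7_3, hg3, hE2]
  · rw [g7_4, hc]
  · rw [g7_5, hsw, hE3, h5]; simp
  · rw [g7_6, hsw, hE3, h6]; simp

end Classify

section Final

open Sum
open scoped Classical

variable {V : Type*} {G : SimpleGraph V} (f : G.edgeSet → V × V)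
  (hf : ∀ e : G.edgeSet, (e : Sym2 V) = s((f e).1, (f e).2))

local notation "X" => V ⊕ (G.edgeSet × Fin 3)

lemma zmod7_ne : ∀ i : ZMod 7, i ≠ i + 1 := by decide

lemma exists_inr_inr (g : ZMod 7 → X)
    (hadj : ∀ i, (oddExpandedGraph G f).Adj (g i) (g (i + 1))) :
    ∃ (i : ZMod 7) (p q : G.edgeSet × Fin 3), g i = inr p ∧ g (i + 1) = inr q := by
  by_contra hcon
  push_neg at hcon
  have step : ∀ i : ZMod 7, (∃ p, g (i + 1) = inr p) ↔ ¬ (∃ p, g i = inr p) := by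
    intro i
    constructor
    · rintro ⟨q, hq⟩ ⟨p, hp⟩
      exact hcon i p q hp hq
    · intro h
      cases hgi : g i with
      | inr p => exact absurd ⟨p, hgi⟩ h
      | inl a =>
        cases hgi1 : g (i + 1) with
        | inr q => exact ⟨q, rfl⟩
        | inl b =>
          have := hadj i
          rw [hgi, hgi1] at this
          exact absurd this (oeg_not_adj_inl_inl _ _)
  have c0 := step 0
  have c1 := step 1
  have c2 := step 2
  have c3 := step 3
  have c4 := step 4
  have c5 := step 5
  have c6 := step 6
  rw [show (0 : ZMod 7) + 1 = 1 by decide] at c0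
  rw [show (1 : ZMod 7) + 1 = 2 by decide] at c1
  rw [show (2 : ZMod 7) + 1 = 3 by decide] at c2
  rw [show (3 : ZMod 7) + 1 = 4 by decide] at c3
  rw [show (4 : ZMod 7) + 1 = 5 by decide] at c4
  rw [show (5 : ZMod 7) + 1 = 6 by decide] at c5
  rw [show (6 : ZMod 7) + 1 = 0 by decide] at c6
  tauto

include hf

lemma classify (g : ZMod 7 → X) (hinj : Function.Injective g)
    (hadj : ∀ i, (oddExpandedGraph G f).Adj (g i) (g (i + 1))) :
    ∃ t : TriData G, swB f t = false ∧
      cycSub (g7 f t) (g7_adj f hf t) = cycSub g hadj := by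
  obtain ⟨i, p, q, hp, hq⟩ := exists_inr_inr f g hadj
  have hpq := hadj i
  rw [hp, hq] at hpq
  obtain ⟨e, hcase⟩ := oeg_adj_inr_inr p q hpq
  rcases hcase with ⟨rfl, rfl⟩ | ⟨rfl, rfl⟩
  · -- g i = (e,1), g (i+1) = (e,2) : rotate so that i ↦ 5
    set g' : ZMod 7 → X := g ∘ (· + (i - 5)) with hg'
    have hinj' : Function.Injective g' :=
      hinj.comp (fun x y h => by simpa using h)
    have hadj' := rot_adj g hadj (i - 5)
    have h5 : g' 5 = inr (e, 1) := by
      show g (5 + (i - 5)) = _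
      rw [show (5 : ZMod 7) + (i - 5) = i by ring]
      exact hp
    have h6 : g' 6 = inr (e, 2) := by
      show g (6 + (i - 5)) = _
      rw [show (6 : ZMod 7) + (i - 5) = i + 1 by ring]
      exact hq
    obtain ⟨t, hsw, heq⟩ := classify_core f hf g' hinj' hadj' e h5 h6
    refine ⟨t, hsw, ?_⟩
    rw [cycSub_congr heq _ hadj']
    exact cycSub_rot g hadj (i - 5)
  · -- g i = (e,2), g (i+1) = (e,1) : reflect
    set g' : ZMod 7 → X := g ∘ ((i + 6) - ·) with hg'
    have hinj' : Function.Injective g' := by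
      intro x y h
      have := hinj h
      have h2 := congrArg (fun z => (i + 6) - z) this
      simpa using h2
    have hadj' := refl_adj g hadj (i + 6)
    have h5 : g' 5 = inr (e, 1) := by
      show g ((i + 6) - 5) = _
      rw [show (i + 6) - 5 = i + 1 by ring]
      exact hq
    have h6 : g' 6 = inr (e, 2) := by
      show g ((i + 6) - 6) = _
      rw [show (i + 6) - 6 = i by ring]
      exact hp
    obtain ⟨t, hsw, heq⟩ := classify_core f hf g' hinj' hadj' e h5 h6
    refine ⟨t, hsw, ?_⟩
    rw [cycSub_congr heq _ hadj']
    exact cycSub_refl g hadj (i + 6)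

lemma tri_rev (t : TriData G) :
    ∃ t' : TriData G, swB f t' = !swB f t ∧
      cycSub (g7 f t') (g7_adj f hf t') = cycSub (g7 f t) (g7_adj f hf t) := by
  obtain ⟨⟨a, b, c⟩, h1, h2, h3⟩ := t
  set t : TriData G := ⟨(a, b, c), h1, h2, h3⟩ with htdef
  set t' : TriData G := ⟨(c, b, a), h2.symm, h1.symm, h3.symm⟩ with ht'def
  have hE3 : oeE3 t' = oeE3 t := Subtype.ext (by
    show s(a, c) = s(c, a); rw [Sym2.eq_swap])
  have hE1 : oeE1 t' = oeE2 t := Subtype.ext (by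
    show s(c, b) = s(b, c); rw [Sym2.eq_swap])
  have hE2 : oeE2 t' = oeE1 t := Subtype.ext (by
    show s(b, a) = s(a, b); rw [Sym2.eq_swap])
  have huv := oeg_fst_ne_snd f hf (oeE3 t)
  have hor := orient f hf t
  have hsw' : swB f t' = !swB f t := by
    cases hsw : swB f t with
    | false =>
      obtain ⟨hcu, hav⟩ := hor.1 hsw
      show (if a = (f (oeE3 t')).1 then false else true) = _
      rw [hE3, if_neg (fun h : a = (f (oeE3 t)).1 => huv (h.symm.trans hav))]
      rfl
    | true =>
      obtain ⟨hcv, hau⟩ := hor.2 hsw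
      show (if a = (f (oeE3 t')).1 then false else true) = _
      rw [hE3, if_pos (hau : a = (f (oeE3 t)).1)]
      rfl
  refine ⟨t', hsw', ?_⟩
  have hfun : g7 f t' = g7 f t ∘ ((4 : ZMod 7) - ·) := by
    funext j
    rcases zmod7_cases j with rfl | rfl | rfl | rfl | rfl | rfl | rfl
    · show g7 f t' 0 = g7 f t (4 - 0)
      rw [show (4 : ZMod 7) - 0 = 4 by decide, g7_0, g7_4]
    · show g7 f t' 1 = g7 f t (4 - 1)
      rw [show (4 : ZMod 7) - 1 = 3 by decide, g7_1, g7_3, hE1]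
    · show g7 f t' 2 = g7 f t (4 - 2)
      rw [show (4 : ZMod 7) - 2 = 2 by decide, g7_2, g7_2]
    · show g7 f t' 3 = g7 f t (4 - 3)
      rw [show (4 : ZMod 7) - 3 = 1 by decide, g7_3, g7_1, hE2]
    · show g7 f t' 4 = g7 f t (4 - 4)
      rw [show (4 : ZMod 7) - 4 = 0 by decide, g7_4, g7_0]
    · show g7 f t' 5 = g7 f t (4 - 5)
      rw [show (4 : ZMod 7) - 5 = 6 by decide, g7_5, g7_6, hE3, hsw']
      cases swB f t <;> simp
    · show g7 f t' 6 = g7 f t (4 - 6)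
      rw [show (4 : ZMod 7) - 6 = 5 by decide, g7_6, g7_5, hE3, hsw']
      cases swB f t <;> simp
  rw [cycSub_congr hfun _ (refl_adj _ (g7_adj f hf t) 4)]
  exact cycSub_refl _ (g7_adj f hf t) 4

end Final

section Psi

open Sum

variable {V : Type*} {G : SimpleGraph V} (f : G.edgeSet → V × V)
  (hf : ∀ e : G.edgeSet, (e : Sym2 V) = s((f e).1, (f e).2))

include hf

noncomputable def psi (t : TriData G) :
    {H : (oddExpandedGraph G f).Subgraph // Nonempty (H.coe ≃g cycleGraphZMod 7)} × Bool :=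
  (⟨cycSub (g7 f t) (g7_adj f hf t),
    ⟨cycSubIso _ (g7_adj f hf t) (g7_inj f hf t) zmod7_ne⟩⟩, swB f t)

lemma psi_bij : Function.Bijective (psi f hf) := by
  constructor
  · intro t t' heq
    obtain ⟨heq1, heq2⟩ := Prod.mk.injEq .. ▸ heq
    have hverts : Set.range (g7 f t) = Set.range (g7 f t') :=
      congrArg SimpleGraph.Subgraph.verts (congrArg Subtype.val heq1)
    -- the marked edge agrees
    have hmem : inr (oeE3 t, (1 : Fin 3)) ∈ Set.range (g7 f t) := by
      cases hsw : swB f t with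
      | false => exact ⟨5, by rw [g7_5, hsw]; simp⟩
      | true => exact ⟨6, by rw [g7_6, hsw]; simp⟩
    rw [hverts] at hmem
    obtain ⟨j, hj⟩ := hmem
    have hE3 : oeE3 t' = oeE3 t := by
      rcases zmod7_cases j with rfl | rfl | rfl | rfl | rfl | rfl | rfl
      · rw [g7_0] at hj; simp at hj
      · rw [g7_1] at hj; simp at hj
      · rw [g7_2] at hj; simp at hj
      · rw [g7_3] at hj; simp at hj
      · rw [g7_4] at hj; simp at hj
      · rw [g7_5] at hj
        cases hsw' : swB f t' with
        | false => rw [hsw'] at hj; simp at hj; exact hj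
        | true => rw [hsw'] at hj; simp at hj
      · rw [g7_6] at hj
        cases hsw' : swB f t' with
        | false => rw [hsw'] at hj; simp at hj
        | true => rw [hsw'] at hj; simp at hj; exact hj
    -- orientation bits agree
    have horA := orient f hf t
    have horB := orient f hf t'
    have hswe : swB f t' = swB f t := heq2.symm
    have hca : t'.1.2.2 = t.1.2.2 ∧ t'.1.1 = t.1.1 := by
      cases hsw : swB f t with
      | false =>
        obtain ⟨hc, ha⟩ := horA.1 hsw
        obtain ⟨hc', ha'⟩ := horB.1 (hswe.trans hsw)
        rw [hE3] at hc' ha'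
        exact ⟨hc'.trans hc.symm, ha'.trans ha.symm⟩
      | true =>
        obtain ⟨hc, ha⟩ := horA.2 hsw
        obtain ⟨hc', ha'⟩ := horB.2 (hswe.trans hsw)
        rw [hE3] at hc' ha'
        exact ⟨hc'.trans hc.symm, ha'.trans ha.symm⟩
    -- the middle vertex agrees
    have hmemb : inl t'.1.2.1 ∈ Set.range (g7 f t') := ⟨2, g7_2 f t'⟩
    rw [← hverts] at hmemb
    obtain ⟨j, hj⟩ := hmemb
    have hb : t.1.2.1 = t'.1.2.1 := by
      rcases zmod7_cases j with rfl | rfl | rfl | rfl | rfl | rfl | rfl <;>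
        [rw [g7_0] at hj; rw [g7_1] at hj; rw [g7_2] at hj; rw [g7_3] at hj;
         rw [g7_4] at hj; rw [g7_5] at hj; rw [g7_6] at hj]
      · -- inl a = inl b' : then b' = a = a', contradicting Adj a' b'
        exfalso
        have : t.1.1 = t'.1.2.1 := by simpa using hj
        exact t'.2.1.ne (hca.2.trans this)
      · exact absurd hj (by simp)
      · simpa using hj
      · exact absurd hj (by simp)
      · exfalso
        have : t.1.2.2 = t'.1.2.1 := by simpa using hj
        exact t'.2.2.1.ne (hca.1.trans this).symm
      · exact absurd hj (by simp)
      · exact absurd hj (by simp)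
    apply Subtype.ext
    have := hca
    exact Prod.ext hca.2.symm (Prod.ext hb (hca.1.symm))
  · rintro ⟨⟨H, ⟨φ⟩⟩, β⟩
    obtain ⟨g, hg, hinj, rfl⟩ := exists_cycSub H φ zmod7_ne
    obtain ⟨t, hsw, hsub⟩ := classify f hf g hinj hg
    cases β with
    | false =>
      exact ⟨t, Prod.ext (Subtype.ext hsub) hsw⟩
    | true =>
      obtain ⟨t', hsw', hsub'⟩ := tri_rev f hf t
      refine ⟨t', Prod.ext (Subtype.ext ?_) ?_⟩
      · exact hsub'.trans hsub
      · show swB f t' = true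
        rw [hsw', hsw]
        rfl

end Psi

theorem oddExpanded_sevenCycles {V : Type*} [Fintype V] (G : SimpleGraph V)
    (f : G.edgeSet → V × V)
    (hf : ∀ e : G.edgeSet, (e : Sym2 V) = s((f e).1, (f e).2)) :
    cycleCount (oddExpandedGraph G f) 7 = 3 * cycleCount G 3 := by
  have h1 : Nat.card (TriData G) = 6 * cycleCount G 3 := tridata_card
  have h2 := Nat.card_eq_of_bijective _ (psi_bij f hf)
  rw [Nat.card_prod, Nat.card_eq_fintype_card (α := Bool)] at h2
  have h3 : Nat.card {H : (oddExpandedGraph G f).Subgraph //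
      Nonempty (H.coe ≃g cycleGraphZMod 7)} = cycleCount (oddExpandedGraph G f) 7 := rfl
  rw [h3] at h2
  rw [h1] at h2
  simp only [Fintype.card_bool] at h2
  omega
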